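/- Let P be a finite graded poset with ranks P₀, P₁, ..., P_r. If P admits a modal chain decomposition (a partition of P into saturated chains each of which contains an element of some fixed rank P_m), then the rank sequence |P₀|, |P₁|, ..., |P_r| is unimodal. -/

import Mathlib

private lemma chain_rk_get {P : Type*} [PartialOrder P] {rk : P → ℕ}
    (hcov : ∀ x y : P, x ⋖ y → rk y = rk x + 1) {L : List P} (hL : L.Chain' (· ⋖ ·)) :
    ∀ j (hj : j < L.length),
      rk (L.get ⟨j, hj⟩) = rk (L.get ⟨0, Nat.lt_of_le_of_lt (Nat.zero_le j) hj⟩) + j := by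
  intro j
  induction j with
  | zero => intro hj; rfl
  | succ k ih =>
    intro hj
    have hk : k < L.length := by omega
    have hc := List.isChain_iff_getElem.mp hL k (by omega)
    have h1 := hcov _ _ hc
    have h2 := ih hk
    simp only [List.get_eq_getElem] at h2 ⊢
    omega

private lemma rank_injOn {P : Type*} [PartialOrder P] {rk : P → ℕ}
    (hcov : ∀ x y : P, x ⋖ y → rk y = rk x + 1) {L : List P} (hL : L.Chain' (· ⋖ ·))
    {x y : P} (hx : x ∈ L) (hy : y ∈ L) (hxy : rk x = rk y) : x = y := by
  obtain ⟨⟨jx, hjx⟩, rfl⟩ := List.mem_iff_get.mp hx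
  obtain ⟨⟨jy, hjy⟩, rfl⟩ := List.mem_iff_get.mp hy
  have h1 := chain_rk_get hcov hL jx hjx
  have h2 := chain_rk_get hcov hL jy hjy
  have : jx = jy := by omega
  subst this; rfl

private lemma exists_mem_rank {P : Type*} [PartialOrder P] {rk : P → ℕ}
    (hcov : ∀ x y : P, x ⋖ y → rk y = rk x + 1) {L : List P} (hL : L.Chain' (· ⋖ ·))
    {x y : P} (hx : x ∈ L) (hy : y ∈ L) {b : ℕ} (hxb : rk x ≤ b) (hby : b ≤ rk y) :
    ∃ z ∈ L, rk z = b := by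
  obtain ⟨⟨jx, hjx⟩, rfl⟩ := List.mem_iff_get.mp hx
  obtain ⟨⟨jy, hjy⟩, rfl⟩ := List.mem_iff_get.mp hy
  have h1 := chain_rk_get hcov hL jx hjx
  have h2 := chain_rk_get hcov hL jy hjy
  have h0 : 0 < L.length := Nat.lt_of_le_of_lt (Nat.zero_le jx) hjx
  set h := rk (L.get ⟨0, h0⟩) with hh
  have hbh : h ≤ b := by omega
  have hjb : b - h < L.length := by omega
  refine ⟨L.get ⟨b - h, hjb⟩, List.mem_iff_get.mpr ⟨⟨b - h, hjb⟩, rfl⟩, ?_⟩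
  have h3 := chain_rk_get hcov hL (b - h) hjb
  omega

theorem modal_chain_decomposition_implies_rank_unimodal
    {P : Type*} [PartialOrder P] [Fintype P] (r : ℕ) (rk : P → ℕ)
    -- P is graded: covers raise rank by one, with a bottom of rank 0
    -- and a top of rank r
    (hcov : ∀ x y : P, x ⋖ y → rk y = rk x + 1)
    (hbot : ∃ x : P, IsBot x ∧ rk x = 0)
    (htop : ∃ x : P, IsTop x ∧ rk x = r)
    (hle : ∀ x : P, rk x ≤ r)
    -- a chain decomposition into saturated chains
    {ι : Type*} [Fintype ι] (C : ι → List P)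
    (hchain : ∀ i, (C i).Chain' (· ⋖ ·))
    (hne : ∀ i, C i ≠ [])
    (hpart : ∀ x : P, ∃! i, x ∈ C i)
    -- the decomposition is modal: every chain meets rank m
    (m : ℕ) (hmodal : ∀ i, ∃ x ∈ C i, rk x = m) :
    ∃ M ≤ r, (∀ n, n < M → Nat.card {x : P // rk x = n} ≤ Nat.card {x : P // rk x = n + 1}) ∧
      (∀ n, M ≤ n → n < r → Nat.card {x : P // rk x = n + 1} ≤ Nat.card {x : P // rk x = n}) := by
  classical
  choose g hg hg' using hpart
  -- m ≤ r
  obtain ⟨x0, _, _⟩ := hbot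
  obtain ⟨z0, _, hz0⟩ := hmodal (g x0)
  have hmr : m ≤ r := hz0 ▸ hle z0
  -- key counting lemma
  have key : ∀ a b : ℕ, (∀ i, (∃ x ∈ C i, rk x = a) → ∃ x ∈ C i, rk x = b) →
      Nat.card {x : P // rk x = a} ≤ Nat.card {x : P // rk x = b} := by
    intro a b hab
    have hex : ∀ x : {x : P // rk x = a}, ∃ y, y ∈ C (g x.1) ∧ rk y = b := by
      intro x
      exact hab (g x.1) ⟨x.1, hg x.1, x.2⟩
    choose f hf1 hf2 using hex
    refine Nat.card_le_card_of_injective (fun x => ⟨f x, hf2 x⟩) ?_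
    intro x₁ x₂ heq
    have heq' : f x₁ = f x₂ := congrArg Subtype.val heq
    have hi : g x₁.1 = g x₂.1 := by
      have e1 := hg' (f x₁) _ (hf1 x₁)
      have e2 := hg' (f x₂) _ (hf1 x₂)
      rw [heq'] at e1
      exact e1.trans e2.symm
    exact Subtype.ext (rank_injOn hcov (hchain (g x₁.1)) (hg x₁.1)
      (hi ▸ hg x₂.1) (x₁.2.trans x₂.2.symm))
  refine ⟨m, hmr, ?_, ?_⟩
  · intro n hn
    refine key n (n + 1) fun i ⟨x, hx, hxn⟩ => ?_
    obtain ⟨z, hz, hzm⟩ := hmodal i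
    exact exists_mem_rank hcov (hchain i) hx hz (by omega) (by omega)
  · intro n hmn _
    refine key (n + 1) n fun i ⟨x, hx, hxn⟩ => ?_
    obtain ⟨z, hz, hzm⟩ := hmodal i
    exact exists_mem_rank hcov (hchain i) hz hx (by omega) (by omega)
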